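/- Let n ≥ 2 and 1 ≤ q ≤ n−1 be integers and C > 0 a real number. Let λ_1, …, λ_{n−1} be real numbers (ordered λ_1 ≤ ⋯ ≤ λ_{n−1}) satisfying 2C > |λ_1| ≥ ⋯ ≥ |λ_{n−q}| > C, λ_{n−q} < 0, and |λ_i| < 1/C for all n−q+1 ≤ i ≤ n−1. Let 0 < ε < min{1, 1/(2(n−1)C²)}. Then for every j with 0 ≤ j ≤ n−q−1 and every subset I ⊆ {1,…,n−1} with |I| = j, Σ_{i∈I} λ_i + (ε−1) Σ_{k=1}^{n−1} λ_k ≥ C − (n−1)/C. -/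
import Mathlib


set_option maxHeartbeats 1600000 in
theorem stmt4 (n q : ℕ) (hn : 2 ≤ n) (hq1 : 1 ≤ q) (hq2 : q ≤ n - 1)
    (C : ℝ) (hC : 0 < C) (lam : ℕ → ℝ)
    (hmono : ∀ i k, 1 ≤ i → i ≤ k → k ≤ n - 1 → lam i ≤ lam k)
    (habs1 : |lam 1| < 2 * C)
    (habsmono : ∀ i, 1 ≤ i → i + 1 ≤ n - q → |lam (i + 1)| ≤ |lam i|)
    (habsC : |lam (n - q)| > C)
    (hneg : lam (n - q) < 0)
    (hsmall : ∀ i, n - q + 1 ≤ i → i ≤ n - 1 → |lam i| < 1 / C)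
    (ε : ℝ) (hε0 : 0 < ε) (hε1 : ε < min 1 (1 / (2 * ((n : ℝ) - 1) * C ^ 2)))
    (j : ℕ) (hj : j ≤ n - q - 1)
    (I : Finset ℕ) (hI : I ⊆ Finset.Icc 1 (n - 1)) (hcard : I.card = j) :
    (∑ i ∈ I, lam i) + (ε - 1) * ∑ k ∈ Finset.Icc 1 (n - 1), lam k
      ≥ C - ((n : ℝ) - 1) / C := by
  have hε1' : ε < 1 := lt_of_lt_of_le hε1 (min_le_left _ _)
  have hε2 : ε < 1 / (2 * ((n : ℝ) - 1) * C ^ 2) :=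
    lt_of_lt_of_le hε1 (min_le_right _ _)
  have hnq1 : 1 ≤ n - q := by omega
  have hnq2 : n - q ≤ n - 1 := by omega
  set S := Finset.Icc 1 (n - 1) with hS
  set B := Finset.Icc 1 (n - q) with hB
  set T := Finset.Icc (n - q + 1) (n - 1) with hT
  -- basic eigenvalue bounds
  have hbigtop : lam (n - q) < -C := by
    rw [abs_of_neg hneg] at habsC; linarith
  have hbig : ∀ i ∈ B, lam i < -C := by
    intro i hi
    rw [hB, Finset.mem_Icc] at hi
    exact lt_of_le_of_lt (hmono i (n - q) hi.1 hi.2 hnq2) hbigtop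
  have habs_le1 : ∀ i, 1 ≤ i → i ≤ n - q → |lam i| ≤ |lam 1| := by
    intro i
    induction i with
    | zero => intro h; omega
    | succ k ih =>
      intro h1 h2
      rcases Nat.lt_or_ge 1 (k + 1) with h | h
      · have hk1 : 1 ≤ k := by omega
        exact (habsmono k hk1 h2).trans (ih hk1 (by omega))
      · have hk : k + 1 = 1 := by omega
        rw [hk]
  have hbig2 : ∀ i ∈ B, -(2 * C) < lam i := by
    intro i hi
    rw [hB, Finset.mem_Icc] at hi
    have h1 := habs_le1 i hi.1 hi.2
    have h2 := neg_abs_le (lam i)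
    linarith
  have hsmall' : ∀ i ∈ T, |lam i| < 1 / C := by
    intro i hi; rw [hT, Finset.mem_Icc] at hi; exact hsmall i hi.1 hi.2
  -- splitting
  have hdisj : Disjoint B T := by
    rw [Finset.disjoint_left]
    intro a haB haT
    rw [hB, Finset.mem_Icc] at haB
    rw [hT, Finset.mem_Icc] at haT
    omega
  have hunion : B ∪ T = S := by
    ext a
    simp only [hB, hT, hS, Finset.mem_union, Finset.mem_Icc]
    omega
  have hdisjI : Disjoint (I ∩ B) (I ∩ T) :=
    hdisj.mono Finset.inter_subset_right Finset.inter_subset_right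
  have hIsplit : ∑ i ∈ I, lam i = ∑ i ∈ I ∩ B, lam i + ∑ i ∈ I ∩ T, lam i := by
    rw [← Finset.sum_union hdisjI, ← Finset.inter_union_distrib_left, hunion,
      Finset.inter_eq_left.mpr hI]
  have hSsplit : ∑ k ∈ S, lam k = ∑ i ∈ B, lam i + ∑ i ∈ T, lam i := by
    rw [← hunion, Finset.sum_union hdisj]
  -- cardinalities
  have hcB : B.card = n - q := by simp [hB, Nat.card_Icc]
  have hcT : T.card = q - 1 := by
    rw [hT, Nat.card_Icc]; omega
  -- Part A : sum over big indices
  have hBIeq : B \ (I ∩ B) = B \ I := by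
    ext a; simp only [Finset.mem_sdiff, Finset.mem_inter]; tauto
  have hsdiff : ∑ i ∈ B \ I, lam i = ∑ i ∈ B, lam i - ∑ i ∈ I ∩ B, lam i := by
    rw [← hBIeq]; exact Finset.sum_sdiff_eq_sub Finset.inter_subset_right
  have hBne : (B \ I).Nonempty := by
    rw [Finset.sdiff_nonempty]
    intro hsub
    have := Finset.card_le_card hsub
    rw [hcard, hcB] at this
    omega
  have hA1 : ∑ i ∈ B \ I, lam i ≤ -C := by
    have hle : ∑ i ∈ B \ I, lam i ≤ ∑ _i ∈ B \ I, (-C) :=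
      Finset.sum_le_sum fun i hi => le_of_lt (hbig i (Finset.sdiff_subset hi))
    rw [Finset.sum_const, nsmul_eq_mul] at hle
    have h1 : (1 : ℝ) ≤ ((B \ I).card : ℝ) := by
      exact_mod_cast Finset.card_pos.mpr hBne
    nlinarith
  have hcBR : ((B.card : ℝ)) ≤ (n : ℝ) - 1 := by
    rw [hcB]
    have : ((n - q : ℕ) : ℝ) ≤ ((n - 1 : ℕ) : ℝ) := by exact_mod_cast hnq2
    have h2 : ((n - 1 : ℕ) : ℝ) = (n : ℝ) - 1 := by
      push_cast [Nat.cast_sub (by omega : 1 ≤ n)]; ring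
    linarith
  have hA2 : -(2 * C) * ((n : ℝ) - 1) ≤ ∑ i ∈ B, lam i := by
    have hle : ∑ _i ∈ B, (-(2 * C)) ≤ ∑ i ∈ B, lam i :=
      Finset.sum_le_sum fun i hi => le_of_lt (hbig2 i hi)
    rw [Finset.sum_const, nsmul_eq_mul] at hle
    have hcB0 : (0 : ℝ) ≤ (B.card : ℝ) := by positivity
    nlinarith
  have hepsb : ε * (2 * ((n : ℝ) - 1) * C ^ 2) < 1 := by
    rw [lt_div_iff₀ (by nlinarith [show (2:ℝ) ≤ (n:ℝ) from by exact_mod_cast hn] : (0:ℝ) < 2 * ((n : ℝ) - 1) * C ^ 2)] at hε2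
    exact hε2
  have hA : ∑ i ∈ I ∩ B, lam i + (ε - 1) * ∑ i ∈ B, lam i ≥ C - 1 / C := by
    have key : ∑ i ∈ I ∩ B, lam i + (ε - 1) * ∑ i ∈ B, lam i
        = -(∑ i ∈ B \ I, lam i) + ε * ∑ i ∈ B, lam i := by
      rw [hsdiff]; ring
    rw [key]
    have h1 : ε * (-(2 * C) * ((n : ℝ) - 1)) ≤ ε * ∑ i ∈ B, lam i :=
      mul_le_mul_of_nonneg_left hA2 hε0.le
    have h2 : -(1 / C) ≤ ε * (-(2 * C) * ((n : ℝ) - 1)) := by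
      have hle : ε * (2 * C * ((n : ℝ) - 1)) ≤ 1 / C := by
        rw [le_div_iff₀ hC]
        have hre : ε * (2 * C * ((n : ℝ) - 1)) * C = ε * (2 * ((n : ℝ) - 1) * C ^ 2) := by
          ring
        linarith
      have heq : ε * (-(2 * C) * ((n : ℝ) - 1)) = -(ε * (2 * C * ((n : ℝ) - 1))) := by
        ring
      linarith
    linarith
  -- Part B : sum over small indices
  have hBsmall : ∑ i ∈ I ∩ T, lam i + (ε - 1) * ∑ i ∈ T, lam i
      ≥ -(((n : ℝ) - 2) / C) := by
    have hrw : ∑ i ∈ I ∩ T, lam i = ∑ i ∈ T, (if i ∈ I then lam i else 0) := by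
      rw [Finset.sum_ite_mem, Finset.inter_comm]
    rw [hrw, Finset.mul_sum, ← Finset.sum_add_distrib]
    have hCi : (0 : ℝ) < 1 / C := by positivity
    have hterm : ∀ i ∈ T, -(1 / C) ≤ (if i ∈ I then lam i else 0) + (ε - 1) * lam i := by
      intro i hi
      have habs := abs_lt.mp (hsmall' i hi)
      by_cases hiI : i ∈ I
      · simp only [if_pos hiI]
        have h1 : ε * (-(1 / C)) ≤ ε * lam i :=
          mul_le_mul_of_nonneg_left habs.1.le hε0.le
        have h2 : ε * (1 / C) ≤ 1 * (1 / C) :=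
          mul_le_mul_of_nonneg_right hε1'.le hCi.le
        have heq1 : ε * (-(1 / C)) = -(ε * (1 / C)) := by ring
        have heq2 : lam i + (ε - 1) * lam i = ε * lam i := by ring
        linarith
      · simp only [if_neg hiI]
        have h1 : (ε - 1) * (1 / C) ≤ (ε - 1) * lam i :=
          mul_le_mul_of_nonpos_left habs.2.le (by linarith)
        have h2 : (0 : ℝ) ≤ ε * (1 / C) := by positivity
        have heq : (ε - 1) * (1 / C) = ε * (1 / C) - 1 / C := by ring
        linarith
    have hge := Finset.sum_le_sum hterm
    rw [Finset.sum_const, nsmul_eq_mul] at hge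
    have hcTR : (T.card : ℝ) ≤ (n : ℝ) - 2 := by
      rw [hcT]
      have h1 : ((q - 1 : ℕ) : ℝ) ≤ ((n - 2 : ℕ) : ℝ) := by
        exact_mod_cast (by omega : q - 1 ≤ n - 2)
      have h2 : ((n - 2 : ℕ) : ℝ) = (n : ℝ) - 2 := by
        push_cast [Nat.cast_sub (by omega : 2 ≤ n)]; ring
      linarith
    have : (T.card : ℝ) * (-(1 / C)) ≥ ((n : ℝ) - 2) * (-(1 / C)) := by nlinarith
    calc -(((n : ℝ) - 2) / C) = ((n : ℝ) - 2) * (-(1 / C)) := by ring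
      _ ≤ (T.card : ℝ) * (-(1 / C)) := this
      _ ≤ _ := hge
  -- conclusion
  rw [hIsplit, hSsplit]
  have hfin : ((n : ℝ) - 1) / C = 1 / C + ((n : ℝ) - 2) / C := by ring
  have hdist : (ε - 1) * (∑ i ∈ B, lam i + ∑ i ∈ T, lam i)
      = (ε - 1) * ∑ i ∈ B, lam i + (ε - 1) * ∑ i ∈ T, lam i := by ring
  linarith
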